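/- Let θ : ℝⁿ → ℝ ∪ {+∞} be a polyhedral convex function and (x, v) ∈ gph ∂θ. Then the second subderivative of θ at x for v equals the indicator function of the critical cone: d²θ(x, v)(w) = δ_{C_θ(x,v)}(w) for all w ∈ ℝⁿ, where C_θ(x, v) = {w : ⟨v, w⟩ = dθ(x)(w)}. -/

import Mathlib

/- STATEMENT 4: for a polyhedral convex function θ and (x,v) ∈ gph ∂θ, the
second subderivative equals the indicator of the critical cone:
d²θ(x,v) = δ_{C_θ(x,v)}. -/

open scoped RealInnerProductSpace
open Filter Topology Classical
open scoped Pointwise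

noncomputable section

variable {n : ℕ}

def Subdiff (f : EuclideanSpace ℝ (Fin n) → EReal) (x : EuclideanSpace ℝ (Fin n)) :
    Set (EuclideanSpace ℝ (Fin n)) :=
  {v | ∀ y, f x + ((⟪v, y - x⟫ : ℝ) : EReal) ≤ f y}

def ProperFn (f : EuclideanSpace ℝ (Fin n) → EReal) : Prop :=
  (∀ x, f x ≠ ⊥) ∧ ∃ x, f x ≠ ⊤

/-- Epigraph of an extended-real-valued function. -/
def Epigraph {α : Type*} (f : α → EReal) : Set (α × ℝ) :=
  {p | f p.1 ≤ (p.2 : EReal)}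

/-- A polyhedral function: its epigraph is a finite intersection of halfspaces. -/
def IsPolyhedralFn (f : EuclideanSpace ℝ (Fin n) → EReal) : Prop :=
  ∃ (m : ℕ) (A : Fin m → EuclideanSpace ℝ (Fin n)) (a b : Fin m → ℝ),
    Epigraph f = {p | ∀ i, ⟪A i, p.1⟫ + a i * p.2 ≤ b i}

/-- First subderivative df(x)(w) = liminf_{t↓0, w'→w} [f(x+tw') − f(x)]/t. -/
def SubderivAt (f : EuclideanSpace ℝ (Fin n) → EReal) (x w : EuclideanSpace ℝ (Fin n)) :
    EReal :=
  Filter.liminf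
    (fun q : ℝ × EuclideanSpace ℝ (Fin n) =>
      (((1 / q.1 : ℝ)) : EReal) * (f (x + q.1 • q.2) - f x))
    ((𝓝[>] (0 : ℝ)) ×ˢ 𝓝 w)

/-- Second subderivative d²f(x,v)(w). -/
def Sub2At (f : EuclideanSpace ℝ (Fin n) → EReal) (x v w : EuclideanSpace ℝ (Fin n)) :
    EReal :=
  Filter.liminf
    (fun q : ℝ × EuclideanSpace ℝ (Fin n) =>
      (((2 / q.1 ^ 2 : ℝ)) : EReal) *
        (f (x + q.1 • q.2) - f x - ((q.1 * ⟪v, q.2⟫ : ℝ) : EReal)))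
    ((𝓝[>] (0 : ℝ)) ×ˢ 𝓝 w)

/-- Critical cone C_f(x,v) = {w : ⟨v,w⟩ = df(x)(w)}. -/
def CritCone (f : EuclideanSpace ℝ (Fin n) → EReal) (x v : EuclideanSpace ℝ (Fin n)) :
    Set (EuclideanSpace ℝ (Fin n)) :=
  {w | ((⟪v, w⟫ : ℝ) : EReal) = SubderivAt f x w}

/-- Extended-real-valued indicator function of a set. -/
def indicatorE {α : Type*} (S : Set α) : α → EReal := fun x => if x ∈ S then 0 else ⊤


lemma real_div_helper (t X d c : ℝ) (ht : 0 < t) (h : t * X + d * c ≤ 0) :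
    X + d * (c / t) ≤ 0 := by
  have heq : X + d * (c / t) = (t * X + d * c) / t := by field_simp
  rw [heq]
  exact div_nonpos_iff.mpr (Or.inr ⟨h, ht.le⟩)

lemma loc_homog {n : ℕ} (θ : EuclideanSpace ℝ (Fin n) → EReal)
    (hpoly : IsPolyhedralFn θ) (hproper : ProperFn θ)
    (x v : EuclideanSpace ℝ (Fin n)) (hv : v ∈ Subdiff θ x)
    (r : ℝ) (hr : θ x = (r : EReal)) :
    ∃ ε : ℝ, 0 < ε ∧ ε ≤ 1 ∧ ∀ u : EuclideanSpace ℝ (Fin n), ‖u‖ ≤ ε →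
      ∀ t : ℝ, 0 < t → t ≤ 1 →
      θ (x + t • u) = (r : EReal) + (t : EReal) * (θ (x + u) - (r : EReal)) := by
  obtain ⟨m, A, a, b, hEpi⟩ := hpoly
  -- basic bound from the subgradient inequality
  have vbound : ∀ u' : EuclideanSpace ℝ (Fin n),
      ((r + ⟪v, u'⟫ : ℝ) : EReal) ≤ θ (x + u') := by
    intro u'
    have h := hv (x + u')
    rw [hr] at h
    simpa [add_sub_cancel_left, EReal.coe_add] using h
  have hxr : (x, r) ∈ Epigraph θ := by simp [Epigraph, hr]
  have hcon : ∀ i, ⟪A i, x⟫ + a i * r ≤ b i := by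
    have := hEpi ▸ hxr
    exact this
  -- all a i are ≤ 0
  have ha : ∀ i, a i ≤ 0 := by
    intro i
    by_contra hai
    push_neg at hai
    obtain ⟨x₀, hx₀⟩ := hproper.2
    have hx₀b := hproper.1 x₀
    lift θ x₀ to ℝ using ⟨hx₀, hx₀b⟩ with r₀ hr₀
    set α := max r₀ ((b i - ⟪A i, x₀⟫ + 1) / a i) with hα
    have hmem : (x₀, α) ∈ Epigraph θ := by
      simp only [Epigraph, Set.mem_setOf_eq]
      rw [← hr₀]
      exact_mod_cast le_max_left _ _
    have hc := (hEpi ▸ hmem) i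
    have hge : (b i - ⟪A i, x₀⟫ + 1) / a i ≤ α := le_max_right _ _
    have : b i - ⟪A i, x₀⟫ + 1 ≤ a i * α := by
      rw [div_le_iff₀ hai] at hge
      linarith [hge]
    simp only at hc
    linarith
  -- choice of ε
  set slack : Fin m → ℝ := fun i => b i - (⟪A i, x⟫ + a i * r) with hslackdef
  have hslack0 : ∀ i, 0 ≤ slack i := fun i => by
    have := hcon i; simp only [hslackdef]; linarith
  set den : Fin m → ℝ := fun i => ‖A i‖ + (‖v‖ + 1) * |a i| + 1 with hden
  have hden0 : ∀ i, 0 < den i := fun i => by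
    have := norm_nonneg (A i); have := abs_nonneg (a i); have : (0:ℝ) ≤ ‖v‖ := norm_nonneg v
    positivity
  set δ : Fin m → ℝ := fun i => if 0 < slack i then slack i / den i else 1 with hδ
  have hδ0 : ∀ i, 0 < δ i := by
    intro i; simp only [hδ]; split
    · exact div_pos (by assumption) (hden0 i)
    · norm_num
  set F : Finset ℝ := insert 1 (Finset.univ.image δ) with hF
  have hFne : F.Nonempty := ⟨1, Finset.mem_insert_self _ _⟩
  set ε : ℝ := F.min' hFne with hε
  have hε1 : ε ≤ 1 := Finset.min'_le _ _ (Finset.mem_insert_self _ _)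
  have hεδ : ∀ i, ε ≤ δ i := fun i =>
    Finset.min'_le _ _ (Finset.mem_insert_of_mem (Finset.mem_image_of_mem δ (Finset.mem_univ i)))
  have hε0 : 0 < ε := by
    rw [hε, Finset.lt_min'_iff]
    intro y hy
    rcases Finset.mem_insert.mp hy with h | h
    · rw [h]; norm_num
    · obtain ⟨i, _, hi⟩ := Finset.mem_image.mp h
      rw [← hi]; exact hδ0 i
  -- slack bound for inactive constraints
  have hslackb : ∀ i, ⟪A i, x⟫ + a i * r ≠ b i →
      ε * (‖A i‖ + (‖v‖ + 1) * |a i|) ≤ slack i := by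
    intro i hi
    have hpos : 0 < slack i := lt_of_le_of_ne (hslack0 i) (by
      intro h; apply hi; simp only [hslackdef] at h; linarith)
    have hδi : δ i = slack i / den i := by simp only [hδ, if_pos hpos]
    have h1 : ε * den i ≤ δ i * den i :=
      mul_le_mul_of_nonneg_right (hεδ i) (le_of_lt (hden0 i))
    rw [hδi, div_mul_cancel₀ _ (ne_of_gt (hden0 i))] at h1
    have h2 : ε * (‖A i‖ + (‖v‖ + 1) * |a i|) ≤ ε * den i := by
      have : den i = ‖A i‖ + (‖v‖ + 1) * |a i| + 1 := by simp [hden]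
      nlinarith [hε0]
    linarith
  -- claim: epigraph membership gives the active-cone inequalities
  have claimK : ∀ (u' : EuclideanSpace ℝ (Fin n)) (s' : ℝ),
      (x + u', r + s') ∈ Epigraph θ → ∀ i, ⟪A i, x⟫ + a i * r = b i →
      ⟪A i, u'⟫ + a i * s' ≤ 0 := by
    intro u' s' hmem i hact
    have hc := (hEpi ▸ hmem) i
    simp only [Set.mem_setOf_eq] at hc
    have hinner : ⟪A i, x + u'⟫ = ⟪A i, x⟫ + ⟪A i, u'⟫ := inner_add_right _ _ _
    rw [hinner] at hc
    linarith [hc]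
  -- claim: active-cone inequalities plus smallness give epigraph membership
  have claimE : ∀ (u' : EuclideanSpace ℝ (Fin n)) (s' : ℝ), ‖u'‖ ≤ ε →
      -((‖v‖ + 1) * ε) ≤ s' →
      (∀ i, ⟪A i, x⟫ + a i * r = b i → ⟪A i, u'⟫ + a i * s' ≤ 0) →
      (x + u', r + s') ∈ Epigraph θ := by
    intro u' s' hu' hs' hK
    rw [hEpi]
    intro i
    simp only [Set.mem_setOf_eq]
    have hinner : ⟪A i, x + u'⟫ = ⟪A i, x⟫ + ⟪A i, u'⟫ := inner_add_right _ _ _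
    rw [hinner]
    by_cases hact : ⟪A i, x⟫ + a i * r = b i
    · have := hK i hact
      linarith
    · have hsl := hslackb i hact
      have h1 : ⟪A i, u'⟫ ≤ ‖A i‖ * ε := by
        calc ⟪A i, u'⟫ ≤ ‖A i‖ * ‖u'‖ := real_inner_le_norm _ _
        _ ≤ ‖A i‖ * ε := mul_le_mul_of_nonneg_left hu' (norm_nonneg _)
      have h2 : a i * s' ≤ |a i| * ((‖v‖ + 1) * ε) := by
        have := mul_le_mul_of_nonpos_left hs' (ha i)
        rcases le_or_gt (a i) 0 with h | h
        · calc a i * s' ≤ a i * (-((‖v‖ + 1) * ε)) := this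
          _ = (-(a i)) * ((‖v‖ + 1) * ε) := by ring
          _ = |a i| * ((‖v‖ + 1) * ε) := by rw [abs_of_nonpos (ha i)]
        · linarith [ha i]
      simp only [hslackdef] at hsl
      nlinarith
  refine ⟨ε, hε0, hε1, ?_⟩
  intro u hu t ht0 ht1
  have hvu : |⟪v, u⟫| ≤ ‖v‖ * ε := by
    calc |⟪v, u⟫| ≤ ‖v‖ * ‖u‖ := abs_real_inner_le_norm _ _
    _ ≤ ‖v‖ * ε := mul_le_mul_of_nonneg_left hu (norm_nonneg _)
  have hbot := hproper.1 (x + t • u)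
  by_cases htop : θ (x + u) = ⊤
  · -- infinite case
    rw [htop]
    rw [EReal.top_sub_coe, EReal.coe_mul_top_of_pos (by exact_mod_cast ht0)]
    rw [EReal.coe_add_top]
    by_contra hLtop
    lift θ (x + t • u) to ℝ using ⟨hLtop, hbot⟩ with p hp
    have hlow : r + t * ⟪v, u⟫ ≤ p := by
      have := vbound (t • u)
      rw [← hp] at this
      have h2 : ⟪v, t • u⟫ = t * ⟪v, u⟫ := real_inner_smul_right _ _ _
      rw [h2] at this
      exact_mod_cast this
    have hmem : (x + t • u, r + (p - r)) ∈ Epigraph θ := by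
      simp only [Epigraph, Set.mem_setOf_eq, ← hp]
      exact_mod_cast (by linarith : p ≤ r + (p - r))
    have hK := claimK (t • u) (p - r) hmem
    have hK' : ∀ i, ⟪A i, x⟫ + a i * r = b i → ⟪A i, u⟫ + a i * ((p - r) / t) ≤ 0 := by
      intro i hact
      have := hK i hact
      rw [real_inner_smul_right] at this
      exact real_div_helper t _ _ _ ht0 this
    have hsge : -((‖v‖ + 1) * ε) ≤ (p - r) / t := by
      have h1 : ⟪v, u⟫ ≤ (p - r) / t := by
        rw [le_div_iff₀ ht0]
        linarith
      have h2 : -(‖v‖ * ε) ≤ ⟪v, u⟫ := by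
        have := abs_le.mp hvu
        linarith [this.1]
      nlinarith [hε0, norm_nonneg v]
    have hE : θ (x + u) ≤ ((r + (p - r) / t : ℝ) : EReal) := claimE u ((p - r) / t) hu hsge hK'
    rw [htop, top_le_iff] at hE
    exact EReal.coe_ne_top _ hE
  · -- finite case
    lift θ (x + u) to ℝ using ⟨htop, hproper.1 (x + u)⟩ with p hp
    -- upper bound: θ (x + t u) ≤ r + t s
    have hub : θ (x + t • u) ≤ ((r + t * (p - r) : ℝ) : EReal) := by
      have hmem : (x + u, r + (p - r)) ∈ Epigraph θ := by
        simp only [Epigraph, Set.mem_setOf_eq, ← hp]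
        exact_mod_cast (by linarith : p ≤ r + (p - r))
      have hK := claimK u (p - r) hmem
      have hsvb : ⟪v, u⟫ ≤ p - r := by
        have h0 := vbound u
        rw [← hp] at h0
        have := EReal.coe_le_coe_iff.mp h0
        linarith
      have hK' : ∀ i, ⟪A i, x⟫ + a i * r = b i → ⟪A i, t • u⟫ + a i * (t * (p - r)) ≤ 0 := by
        intro i hact
        rw [real_inner_smul_right]
        have := hK i hact
        nlinarith
      have hsmall : ‖t • u‖ ≤ ε := by
        rw [norm_smul, Real.norm_eq_abs, abs_of_pos ht0]
        nlinarith [norm_nonneg u]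
      have hts : -((‖v‖ + 1) * ε) ≤ t * (p - r) := by
        have h2 : -(‖v‖ * ε) ≤ ⟪v, u⟫ := by linarith [(abs_le.mp hvu).1]
        rcases le_or_gt 0 (p - r) with h | h
        · nlinarith [hε0, norm_nonneg v]
        · nlinarith [hε0, norm_nonneg v]
      exact claimE (t • u) (t * (p - r)) hsmall hts hK'
    -- lower bound
    have hlb : ((r + t * (p - r) : ℝ) : EReal) ≤ θ (x + t • u) := by
      have hnt : θ (x + t • u) ≠ ⊤ := by
        intro h
        rw [h, top_le_iff] at hub
        exact EReal.coe_ne_top _ hub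
      lift θ (x + t • u) to ℝ using ⟨hnt, hbot⟩ with q hq
      have hmem : (x + t • u, r + (q - r)) ∈ Epigraph θ := by
        simp only [Epigraph, Set.mem_setOf_eq, ← hq]
        exact_mod_cast (by linarith : q ≤ r + (q - r))
      have hK := claimK (t • u) (q - r) hmem
      have hK' : ∀ i, ⟪A i, x⟫ + a i * r = b i → ⟪A i, u⟫ + a i * ((q - r) / t) ≤ 0 := by
        intro i hact
        have := hK i hact
        rw [real_inner_smul_right] at this
        exact real_div_helper t _ _ _ ht0 this
      have hlow : r + t * ⟪v, u⟫ ≤ q := by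
        have := vbound (t • u)
        rw [← hq, real_inner_smul_right] at this
        exact_mod_cast this
      have hsge : -((‖v‖ + 1) * ε) ≤ (q - r) / t := by
        have h1 : ⟪v, u⟫ ≤ (q - r) / t := by
          rw [le_div_iff₀ ht0]; linarith
        have h2 : -(‖v‖ * ε) ≤ ⟪v, u⟫ := by linarith [(abs_le.mp hvu).1]
        nlinarith [hε0, norm_nonneg v]
      have hE : θ (x + u) ≤ ((r + (q - r) / t : ℝ) : EReal) := claimE u ((q - r) / t) hu hsge hK'
      rw [← hp] at hE
      have hple : p ≤ r + (q - r) / t := by exact_mod_cast hE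
      have hfin : r + t * (p - r) ≤ q := by
        have h3 : p - r ≤ (q - r) / t := by linarith
        rw [le_div_iff₀ ht0] at h3
        nlinarith
      exact_mod_cast hfin
    have hfin : θ (x + t • u) = ((r + t * (p - r) : ℝ) : EReal) := le_antisymm hub hlb
    rw [hfin, ← EReal.coe_sub, ← EReal.coe_mul, ← EReal.coe_add]


lemma ereal_le_zero (a : EReal) (h : ∀ δ : ℝ, 0 < δ → a ≤ (δ : EReal)) : a ≤ 0 := by
  by_contra h0
  push_neg at h0
  obtain ⟨c, hc0, hca⟩ := EReal.exists_between_coe_real h0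
  exact absurd (h c (by exact_mod_cast hc0)) (not_le.mpr hca)

lemma ereal_ge_coe (a : EReal) (z : ℝ) (h : ∀ δ : ℝ, 0 < δ → ((z - δ : ℝ) : EReal) ≤ a) :
    (z : EReal) ≤ a := by
  by_contra h0
  push_neg at h0
  obtain ⟨c, hac, hcz⟩ := EReal.exists_between_coe_real h0
  have hzc : (0:ℝ) < z - c := by
    have : c < z := by exact_mod_cast hcz
    linarith
  have := h (z - c) hzc
  simp only [sub_sub_cancel] at this
  exact absurd this (not_le.mpr hac)

lemma ereal_eq_top (a : EReal) (h : ∀ M : ℝ, (M : EReal) ≤ a) : a = ⊤ := by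
  induction a with
  | bot => exact absurd (h 0) (by simp)
  | coe p => exact absurd (h (p+1)) (by exact_mod_cast by norm_num)
  | top => rfl

theorem statement4 {n : ℕ} (θ : EuclideanSpace ℝ (Fin n) → EReal)
    (hpoly : IsPolyhedralFn θ) (hproper : ProperFn θ)
    (x v : EuclideanSpace ℝ (Fin n)) (hv : v ∈ Subdiff θ x) :
    ∀ w, Sub2At θ x v w = indicatorE (CritCone θ x v) w := by
  intro w
  classical
  have hbx := hproper.1 x
  have htx : θ x ≠ ⊤ := by
    intro h
    obtain ⟨x₀, hx₀⟩ := hproper.2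
    have h2 := hv x₀
    rw [h, EReal.top_add_coe] at h2
    exact hx₀ (top_le_iff.mp h2)
  obtain ⟨r, hr⟩ : ∃ r : ℝ, θ x = (r : EReal) :=
    ⟨(θ x).toReal, (EReal.coe_toReal htx hbx).symm⟩
  obtain ⟨ε, hε0, hε1, hkey⟩ := loc_homog θ hpoly hproper x v hv r hr
  set L : Filter (ℝ × EuclideanSpace ℝ (Fin n)) := (𝓝[>] (0:ℝ)) ×ˢ 𝓝 w with hL
  -- basic subgradient bound
  have vb : ∀ (t : ℝ) (u : EuclideanSpace ℝ (Fin n)), 0 < t → ((r + t * ⟪v, u⟫ : ℝ) : EReal) ≤ θ (x + t • u) := by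
    intro t u ht
    have h2 := hv (x + t • u)
    rw [hr] at h2
    have h3 : x + t • u - x = t • u := add_sub_cancel_left x (t • u)
    rw [h3, real_inner_smul_right] at h2
    exact_mod_cast h2
  set R : ℝ := ‖w‖ + 1 with hRdef
  have hR : 0 < R := by have := norm_nonneg w; simp only [hRdef]; linarith
  set c : ℝ := ε / R with hcdef
  have hc0 : 0 < c := div_pos hε0 hR
  set g : EuclideanSpace ℝ (Fin n) → EReal := fun u => ((1 / c : ℝ) : EReal) * (θ (x + c • u) - (r : EReal)) with hgdef
  -- the key formula
  have formula : ∀ (t : ℝ) (u : EuclideanSpace ℝ (Fin n)), 0 < t → t ≤ c → ‖u‖ ≤ R →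
      θ (x + t • u) = (r : EReal) + (t : EReal) * g u := by
    intro t u ht0 htc hu
    have h1 : ‖c • u‖ ≤ ε := by
      rw [norm_smul, Real.norm_eq_abs, abs_of_pos hc0]
      calc c * ‖u‖ ≤ c * R := mul_le_mul_of_nonneg_left hu hc0.le
      _ = ε := by rw [hcdef]; field_simp
    have h2 : (0:ℝ) < t / c := div_pos ht0 hc0
    have h3 : t / c ≤ 1 := by rw [div_le_one hc0]; exact htc
    have h4 := hkey (c • u) h1 (t / c) h2 h3
    rw [smul_smul, div_mul_cancel₀ _ (ne_of_gt hc0)] at h4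
    rw [h4, hgdef]
    show (r : EReal) + ((t/c : ℝ) : EReal) * (θ (x + c • u) - (r:EReal)) =
      (r : EReal) + (t : EReal) * (((1/c : ℝ) : EReal) * (θ (x + c • u) - (r:EReal)))
    have hcoef : ((t/c : ℝ) : EReal) = ((t * (1/c) : ℝ) : EReal) := by norm_cast; ring
    rw [hcoef, EReal.coe_mul, mul_assoc]
  -- structure of g
  have gcase : ∀ u : EuclideanSpace ℝ (Fin n), g u = ⊤ ∨ ∃ s : ℝ, g u = (s : EReal) ∧ ⟪v, u⟫ ≤ s := by
    intro u
    by_cases h : θ (x + c • u) = ⊤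
    · left
      rw [hgdef]
      simp only
      rw [h, EReal.top_sub_coe, EReal.coe_mul_top_of_pos (by positivity)]
    · right
      have hb := hproper.1 (x + c • u)
      obtain ⟨p, hp⟩ : ∃ p : ℝ, θ (x + c • u) = (p : EReal) :=
        ⟨(θ (x + c • u)).toReal, (EReal.coe_toReal h hb).symm⟩
      refine ⟨(1/c) * (p - r), ?_, ?_⟩
      · rw [hgdef]
        simp only
        rw [hp, ← EReal.coe_sub, ← EReal.coe_mul]
      · have h5 := vb c u hc0
        rw [hp] at h5
        have h6 : r + c * ⟪v, u⟫ ≤ p := by exact_mod_cast h5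
        rw [← sub_nonneg]
        have : (1/c) * (p - r) - ⟪v, u⟫ = (1/c) * (p - r - c * ⟪v, u⟫) := by field_simp
        rw [this]
        apply mul_nonneg (by positivity)
        linarith
  have glb : ∀ u : EuclideanSpace ℝ (Fin n), ((⟪v, u⟫ : ℝ) : EReal) ≤ g u := by
    intro u
    rcases gcase u with h | ⟨s, hs, hvs⟩
    · rw [h]; exact le_top
    · rw [hs]; exact_mod_cast hvs
  -- define the integrands
  set P : ℝ × EuclideanSpace ℝ (Fin n) → EReal := fun q =>
    (((2 / q.1 ^ 2 : ℝ)) : EReal) * (θ (x + q.1 • q.2) - (r:EReal) - ((q.1 * ⟪v, q.2⟫ : ℝ) : EReal))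
    with hPdef
  have hSub2 : Sub2At θ x v w = Filter.liminf P L := by
    rw [Sub2At, hr]
  -- nonnegativity of P on positive t
  have hP0 : ∀ q : ℝ × EuclideanSpace ℝ (Fin n), 0 < q.1 → (0 : EReal) ≤ P q := by
    rintro ⟨t, u⟩ ht
    have hbd := vb t u ht
    simp only [hPdef]
    by_cases h : θ (x + t • u) = ⊤
    · rw [h, EReal.top_sub_coe, EReal.top_sub_coe, EReal.coe_mul_top_of_pos (by positivity)]
      exact le_top
    · have hb := hproper.1 (x + t • u)
      obtain ⟨y, hy⟩ : ∃ y : ℝ, θ (x + t • u) = (y : EReal) :=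
        ⟨(θ (x + t • u)).toReal, (EReal.coe_toReal h hb).symm⟩
      rw [hy, ← EReal.coe_sub, ← EReal.coe_sub, ← EReal.coe_mul]
      have h6 : r + t * ⟪v, u⟫ ≤ y := by rw [hy] at hbd; exact_mod_cast hbd
      have : (0:ℝ) ≤ 2 / t ^ 2 * (y - r - t * ⟪v, u⟫) := by
        apply mul_nonneg (by positivity); linarith
      exact_mod_cast this
  have h0le : (0 : EReal) ≤ Filter.liminf P L := by
    rw [Filter.liminf_eq]
    apply le_sSup
    simp only [Set.mem_setOf_eq]
    have hset : {q : ℝ × EuclideanSpace ℝ (Fin n) | 0 < q.1} ∈ L := by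
      rw [hL]
      exact Filter.mem_of_superset
        (Filter.prod_mem_prod self_mem_nhdsWithin Filter.univ_mem)
        (by rintro ⟨t, u⟩ ⟨ht, _⟩; exact ht)
    exact Filter.eventually_iff_exists_mem.mpr ⟨_, hset, fun q hq => hP0 q hq⟩
  -- the good event set
  set Ev : Set (ℝ × EuclideanSpace ℝ (Fin n)) := (Set.Ioc (0:ℝ) c) ×ˢ {u : EuclideanSpace ℝ (Fin n) | ‖u‖ ≤ R} with hEvdef
  have hEvL : Ev ∈ L := by
    rw [hL, hEvdef]
    apply Filter.prod_mem_prod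
    · exact Ioc_mem_nhdsGT_of_mem ⟨le_refl 0, hc0⟩
    · have h1 : Metric.closedBall w 1 ∈ 𝓝 w := Metric.closedBall_mem_nhds w one_pos
      apply Filter.mem_of_superset h1
      intro u hu
      simp only [Metric.mem_closedBall] at hu
      have : ‖u‖ ≤ ‖u - w‖ + ‖w‖ := by
        calc ‖u‖ = ‖(u - w) + w‖ := by rw [sub_add_cancel]
        _ ≤ ‖u - w‖ + ‖w‖ := norm_add_le _ _
      rw [hRdef]
      rw [dist_eq_norm] at hu
      simp only [Set.mem_setOf_eq]
      linarith
  -- the form of P on Ev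
  have hform : ∀ q : ℝ × EuclideanSpace ℝ (Fin n), q ∈ Ev →
      (g q.2 = ⊤ ∧ P q = ⊤) ∨
      (∃ s : ℝ, g q.2 = (s : EReal) ∧ ⟪v, q.2⟫ ≤ s ∧
        P q = ((2 / q.1 * (s - ⟪v, q.2⟫) : ℝ) : EReal)) := by
    rintro ⟨t, u⟩ hq
    rw [hEvdef] at hq
    obtain ⟨⟨ht0, htc⟩, hu⟩ := hq
    have hf := formula t u ht0 htc hu
    rcases gcase u with h | ⟨s, hs, hvs⟩
    · left
      refine ⟨h, ?_⟩
      rw [h] at hf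
      rw [EReal.coe_mul_top_of_pos (by exact_mod_cast ht0), EReal.coe_add_top] at hf
      simp only [hPdef]
      rw [hf, EReal.top_sub_coe, EReal.top_sub_coe,
        EReal.coe_mul_top_of_pos (by positivity)]
    · right
      refine ⟨s, hs, hvs, ?_⟩
      rw [hs] at hf
      rw [← EReal.coe_mul, ← EReal.coe_add] at hf
      simp only [hPdef]
      rw [hf, ← EReal.coe_sub, ← EReal.coe_sub, ← EReal.coe_mul]
      norm_cast
      field_simp
      ring
  -- identification of the subderivative
  have hSd : SubderivAt θ x w = Filter.liminf g (𝓝 w) := by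
    rw [SubderivAt, hr]
    have hcongr : ∀ᶠ q : ℝ × EuclideanSpace ℝ (Fin n) in L,
        ((1 / q.1 : ℝ) : EReal) * (θ (x + q.1 • q.2) - (r : EReal)) = g q.2 := by
      apply Filter.eventually_iff_exists_mem.mpr
      refine ⟨Ev, hEvL, ?_⟩
      rintro ⟨t, u⟩ hq
      rw [hEvdef] at hq
      obtain ⟨⟨ht0, htc⟩, hu⟩ := hq
      have hf := formula t u ht0 htc hu
      rcases gcase u with h | ⟨s, hs, hvs⟩
      · rw [h] at hf ⊢
        rw [EReal.coe_mul_top_of_pos (by exact_mod_cast ht0), EReal.coe_add_top] at hf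
        rw [hf, EReal.top_sub_coe, EReal.coe_mul_top_of_pos (by positivity)]
      · rw [hs] at hf ⊢
        rw [← EReal.coe_mul, ← EReal.coe_add] at hf
        rw [hf, ← EReal.coe_sub, ← EReal.coe_mul]
        norm_cast
        field_simp
        ring
    rw [Filter.liminf_congr hcongr]
    have : (fun q : ℝ × EuclideanSpace ℝ (Fin n) => g q.2) = g ∘ Prod.snd := rfl
    rw [this, Filter.liminf_comp, Filter.map_snd_prod]
  -- lower bound on liminf g
  have hcont : Continuous fun u : EuclideanSpace ℝ (Fin n) => ⟪v, u⟫ := by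
    exact continuous_const.inner continuous_id
  have glower : ((⟪v, w⟫ : ℝ) : EReal) ≤ Filter.liminf g (𝓝 w) := by
    apply ereal_ge_coe
    intro δ hδ
    rw [Filter.liminf_eq]
    apply le_sSup
    simp only [Set.mem_setOf_eq]
    have hopen : {u : EuclideanSpace ℝ (Fin n) | ⟪v, w⟫ - δ < ⟪v, u⟫} ∈ 𝓝 w := by
      apply IsOpen.mem_nhds (isOpen_lt continuous_const hcont)
      simp only [Set.mem_setOf_eq]; linarith
    apply Filter.eventually_iff_exists_mem.mpr
    refine ⟨_, hopen, fun u hu => ?_⟩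
    calc ((⟪v, w⟫ - δ : ℝ) : EReal) ≤ ((⟪v, u⟫ : ℝ) : EReal) := by
          exact_mod_cast le_of_lt hu
    _ ≤ g u := glb u
  rw [hSub2, indicatorE]
  by_cases hC : w ∈ CritCone θ x v
  · rw [if_pos hC]
    have hCval : ((⟪v, w⟫ : ℝ) : EReal) = Filter.liminf g (𝓝 w) := by
      have := hC
      rw [CritCone, Set.mem_setOf_eq, hSd] at this
      exact this
    refine le_antisymm ?_ h0le
    apply ereal_le_zero
    intro δ hδ
    apply Filter.liminf_le_of_frequently_le'
    rw [Filter.frequently_iff]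
    intro S hS
    have hSE : S ∩ Ev ∈ L := Filter.inter_mem hS hEvL
    rw [hL, Filter.mem_prod_iff] at hSE
    obtain ⟨T, hT, U, hU, hTU⟩ := hSE
    obtain ⟨t, htT⟩ := Filter.nonempty_of_mem hT
    have hwU : w ∈ U := mem_of_mem_nhds hU
    have htEv : (t, w) ∈ S ∩ Ev := hTU ⟨htT, hwU⟩
    have ht0 : 0 < t := by
      have := htEv.2
      rw [hEvdef] at this
      exact this.1.1
    -- find a good u
    have hlim : Filter.liminf g (𝓝 w) < ((⟪v, w⟫ + t * δ / 4 : ℝ) : EReal) := by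
      rw [← hCval]
      exact_mod_cast (by nlinarith : ⟪v, w⟫ < ⟪v, w⟫ + t * δ / 4)
    have hfreq : ∃ᶠ u in 𝓝 w, g u < ((⟪v, w⟫ + t * δ / 4 : ℝ) : EReal) :=
      Filter.frequently_lt_of_liminf_lt (h := hlim)
    have hev2 : ∀ᶠ u in 𝓝 w, ⟪v, w⟫ - t * δ / 4 < ⟪v, u⟫ := by
      apply Filter.eventually_iff_exists_mem.mpr
      refine ⟨{u : EuclideanSpace ℝ (Fin n) | ⟪v, w⟫ - t * δ / 4 < ⟪v, u⟫}, ?_, fun u hu => hu⟩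
      apply IsOpen.mem_nhds (isOpen_lt continuous_const hcont)
      simp only [Set.mem_setOf_eq]; nlinarith
    have hev3 : ∀ᶠ u in 𝓝 w, u ∈ U := Filter.eventually_iff_exists_mem.mpr ⟨U, hU, fun u h => h⟩
    obtain ⟨u, hu1, hu2, hu3⟩ := (hfreq.and_eventually (hev2.and hev3)).exists
    have hmem : (t, u) ∈ S ∩ Ev := hTU ⟨htT, hu3⟩
    refine ⟨(t, u), hmem.1, ?_⟩
    rcases hform (t, u) hmem.2 with ⟨hgt, _⟩ | ⟨s, hgs, hvs, hPs⟩
    · rw [hgt] at hu1; exact absurd hu1 (by simp)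
    · rw [hPs]
      rw [hgs] at hu1
      have hs1 : s < ⟪v, w⟫ + t * δ / 4 := by exact_mod_cast hu1
      have : 2 / t * (s - ⟪v, u⟫) ≤ δ := by
        have h1 : s - ⟪v, u⟫ < t * δ / 2 := by linarith
        rw [div_mul_eq_mul_div, div_le_iff₀ ht0]
        nlinarith
      exact_mod_cast this
  · rw [if_neg hC]
    have hCne : ((⟪v, w⟫ : ℝ) : EReal) ≠ Filter.liminf g (𝓝 w) := by
      intro h
      apply hC
      rw [CritCone, Set.mem_setOf_eq, hSd]
      exact h
    have hlt : ((⟪v, w⟫ : ℝ) : EReal) < Filter.liminf g (𝓝 w) := lt_of_le_of_ne glower hCne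
    obtain ⟨b, hb1, hb2⟩ := EReal.exists_between_coe_real hlt
    have hvwb : ⟪v, w⟫ < b := by exact_mod_cast hb1
    set δ₀ : ℝ := (b - ⟪v, w⟫) / 2 with hδ₀def
    have hδ₀ : 0 < δ₀ := by rw [hδ₀def]; linarith
    have hGev : ∀ᶠ u in 𝓝 w, ∀ s : ℝ, g u = (s : EReal) → δ₀ ≤ s - ⟪v, u⟫ := by
      have h1 : ∀ᶠ u in 𝓝 w, (b : EReal) < g u :=
        Filter.eventually_lt_of_lt_liminf hb2
      have h2 : ∀ᶠ u in 𝓝 w, ⟪v, u⟫ < ⟪v, w⟫ + δ₀ := by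
        apply Filter.eventually_iff_exists_mem.mpr
        refine ⟨{u : EuclideanSpace ℝ (Fin n) | ⟪v, u⟫ < ⟪v, w⟫ + δ₀}, ?_, fun u hu => hu⟩
        apply IsOpen.mem_nhds (isOpen_lt hcont continuous_const)
        simp only [Set.mem_setOf_eq]; linarith
      filter_upwards [h1, h2] with u hu1 hu2 s hgs
      rw [hgs] at hu1
      have : b < s := by exact_mod_cast hu1
      rw [hδ₀def]; linarith
    apply ereal_eq_top
    intro M
    rcases le_or_gt M 0 with hM | hM
    · calc (M : EReal) ≤ 0 := by exact_mod_cast hM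
      _ ≤ Filter.liminf P L := h0le
    · rw [Filter.liminf_eq]
      apply le_sSup
      have hTset : Set.Ioc (0:ℝ) (min c (2 * δ₀ / M)) ∈ 𝓝[>] (0:ℝ) :=
        Ioc_mem_nhdsGT_of_mem ⟨le_refl 0, lt_min hc0 (by positivity)⟩
      have hUset : {u : EuclideanSpace ℝ (Fin n) | ‖u‖ ≤ R} ∩ {u : EuclideanSpace ℝ (Fin n) | ∀ s : ℝ, g u = (s : EReal) → δ₀ ≤ s - ⟪v, u⟫}
          ∈ 𝓝 w := by
        apply Filter.inter_mem
        · have h1 : Metric.closedBall w 1 ∈ 𝓝 w := Metric.closedBall_mem_nhds w one_pos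
          apply Filter.mem_of_superset h1
          intro u hu
          simp only [Metric.mem_closedBall] at hu
          have : ‖u‖ ≤ ‖u - w‖ + ‖w‖ := by
            calc ‖u‖ = ‖(u - w) + w‖ := by rw [sub_add_cancel]
            _ ≤ ‖u - w‖ + ‖w‖ := norm_add_le _ _
          rw [dist_eq_norm] at hu
          simp only [Set.mem_setOf_eq, hRdef]
          linarith
        · exact hGev
      show ∀ᶠ q in L, ((M : ℝ) : EReal) ≤ P q
      apply Filter.eventually_iff_exists_mem.mpr
      refine ⟨_, by rw [hL]; exact Filter.prod_mem_prod hTset hUset, ?_⟩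
      rintro ⟨t, u⟩ ⟨htm, hum⟩
      simp only [Set.mem_Ioc] at htm
      obtain ⟨ht0, htc⟩ := htm
      obtain ⟨huR, huG⟩ := hum
      have hEvm : (t, u) ∈ Ev := by
        rw [hEvdef]
        exact ⟨⟨ht0, le_trans htc (min_le_left _ _)⟩, huR⟩
      rcases hform (t, u) hEvm with ⟨_, hPt⟩ | ⟨s, hgs, hvs, hPs⟩
      · rw [hPt]; exact le_top
      · rw [hPs]
        have h1 : δ₀ ≤ s - ⟪v, u⟫ := huG s hgs
        have h2 : t ≤ 2 * δ₀ / M := le_trans htc (min_le_right _ _)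
        have : M ≤ 2 / t * (s - ⟪v, u⟫) := by
          rw [div_mul_eq_mul_div, le_div_iff₀ ht0]
          rw [le_div_iff₀ hM] at h2
          nlinarith
        exact_mod_cast this


end
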